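/- arXiv:1904.11040 — 5 statements merged into one kernel-verified Lean document; each statement's English description precedes it below -/
import Mathlib

section
/- Let κ > 2 and m ∈ (0, 1). Define g(ρ) := (κ − 2√(1 − m/ρ))/(κ − 2√(1 − m)) − ρ for ρ ∈ (m, ∞) (the denominator is positive). Then g(1) = 0 and g'(ρ) < 0 for all ρ ∈ (m, ∞). Consequently ρ = 1 is the unique zero of g on (m, ∞), with g(ρ) > 0 for ρ ∈ (m, 1) and g(ρ) < 0 for ρ ∈ (1, ∞). -/
open Real

lemma sfrm_hasDeriv (κ m D : ℝ) (hm0 : 0 < m) (ρ : ℝ) (hρ : m < ρ) :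
    HasDerivAt (fun ρ => (κ - 2 * Real.sqrt (1 - m/ρ)) / D - ρ)
      (-((m / ρ^2) / Real.sqrt (1 - m/ρ)) / D - 1) ρ := by
  have hρ0 : 0 < ρ := hm0.trans hρ
  have harg : 0 < 1 - m/ρ := by
    have : m/ρ < 1 := (div_lt_one hρ0).mpr hρ
    linarith
  have h1 : HasDerivAt (fun x : ℝ => 1 - m / x) (m / ρ^2) ρ := by
    have := ((hasDerivAt_inv hρ0.ne').const_mul m).const_sub 1
    refine this.congr_deriv ?_
    ring
  have h2 : HasDerivAt (fun x : ℝ => Real.sqrt (1 - m / x))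
      ((m / ρ^2) / (2 * Real.sqrt (1 - m/ρ))) ρ := h1.sqrt harg.ne'
  have h3 := (((h2.const_mul 2).const_sub κ).div_const D).sub (hasDerivAt_id ρ)
  refine h3.congr_deriv ?_
  have hs : Real.sqrt (1 - m/ρ) ≠ 0 := (Real.sqrt_pos.mpr harg).ne'
  rcases eq_or_ne D 0 with hD | hD
  · simp [hD]
  · ring

/-- For `κ > 2` and `m ∈ (0,1)`, the function
`g(ρ) := (κ − 2√(1 − m/ρ))/(κ − 2√(1 − m)) − ρ` on `(m, ∞)` (whose denominator is
positive) satisfies `g(1) = 0` and `g'(ρ) < 0` on `(m, ∞)`; consequently `ρ = 1` is the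
unique zero of `g` on `(m, ∞)`, with `g > 0` on `(m, 1)` and `g < 0` on `(1, ∞)`. -/
theorem schwarzschild_flow_rhs_monotone (κ m : ℝ) (hκ : 2 < κ) (hm : m ∈ Set.Ioo (0:ℝ) 1) :
    let g : ℝ → ℝ := fun ρ => (κ - 2 * Real.sqrt (1 - m/ρ)) / (κ - 2 * Real.sqrt (1 - m)) - ρ
    0 < κ - 2 * Real.sqrt (1 - m) ∧
    g 1 = 0 ∧
    (∀ ρ : ℝ, m < ρ → deriv g ρ < 0) ∧
    (∀ ρ : ℝ, m < ρ → g ρ = 0 → ρ = 1) ∧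
    (∀ ρ : ℝ, m < ρ → ρ < 1 → 0 < g ρ) ∧
    (∀ ρ : ℝ, 1 < ρ → g ρ < 0) := by
  obtain ⟨hm0, hm1⟩ := hm
  intro g
  set D : ℝ := κ - 2 * Real.sqrt (1 - m) with hDdef
  have hsqlt : Real.sqrt (1 - m) < 1 := by
    exact (Real.sqrt_lt' one_pos).mpr (by nlinarith)
  have hD : 0 < D := by
    simp only [hDdef]; nlinarith [Real.sqrt_nonneg (1 - m)]
  have hg1 : g 1 = 0 := by
    simp only [g]
    rw [div_one, div_self hD.ne']
    ring
  have hderiv : ∀ ρ : ℝ, m < ρ → deriv g ρ < 0 := by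
    intro ρ hρ
    have h := sfrm_hasDeriv κ m D hm0 ρ hρ
    rw [h.deriv]
    have hρ0 : 0 < ρ := hm0.trans hρ
    have harg : 0 < 1 - m/ρ := by
      have : m/ρ < 1 := (div_lt_one hρ0).mpr hρ
      linarith
    have hs : 0 < Real.sqrt (1 - m/ρ) := Real.sqrt_pos.mpr harg
    have hpos : 0 < (m / ρ^2) / Real.sqrt (1 - m/ρ) / D := by positivity
    have : -((m / ρ^2) / Real.sqrt (1 - m/ρ)) / D = -((m / ρ^2) / Real.sqrt (1 - m/ρ) / D) := by
      ring
    rw [this]; linarith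
  have hanti : StrictAntiOn g (Set.Ioi m) := by
    apply strictAntiOn_of_deriv_neg (convex_Ioi m)
    · intro x hx
      exact (sfrm_hasDeriv κ m D hm0 x hx).continuousAt.continuousWithinAt
    · intro x hx
      rw [interior_Ioi] at hx
      exact hderiv x hx
  have h1mem : (1:ℝ) ∈ Set.Ioi m := hm1
  refine ⟨hD, hg1, hderiv, ?_, ?_, ?_⟩
  · intro ρ hρ hgρ
    exact hanti.injOn hρ h1mem (by rw [hgρ, hg1])
  · intro ρ hρ hρ1
    have := hanti hρ h1mem hρ1
    rw [hg1] at this; exact this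
  · intro ρ hρ1
    have := hanti h1mem (hm1.trans hρ1) hρ1
    rw [hg1] at this; exact this
end

section
/- Let M > 0, R̄ > 2M, and κ > 2. Define F(R) := [−(2/R)√(1 − 2M/R) + (2/R̄)√(1 − 2M/R̄) + κ(1/R − 1/R̄)]·√(1 − 2M/R) for R ∈ (2M, ∞). Then F(R̄) = 0, F(R) > 0 for all R ∈ (2M, R̄), and F(R) < 0 for all R ∈ (R̄, ∞). In particular, R̄ is the unique zero of F on (2M, ∞). -/
open Real

private lemma schw_key (M : ℝ) {u v : ℝ} (hu : 0 < u) (huv : u ≤ v)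
    (hv : 2*M*v ≤ 1) (hM : 0 < M) :
    u * (1 - Real.sqrt (1 - 2*M*u)) ≤ v * (1 - Real.sqrt (1 - 2*M*v)) := by
  have hv0 : 0 < v := lt_of_lt_of_le hu huv
  have h2 : 0 ≤ 1 - 2*M*u := by nlinarith
  have h1 : 0 ≤ 1 - 2*M*v := by linarith
  set su := Real.sqrt (1 - 2*M*u) with hsu
  set sv := Real.sqrt (1 - 2*M*v) with hsv
  have hsu2 : su * su = 1 - 2*M*u := Real.mul_self_sqrt h2
  have hsv2 : sv * sv = 1 - 2*M*v := Real.mul_self_sqrt h1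
  have hsu0 : 0 ≤ su := Real.sqrt_nonneg _
  have hsv0 : 0 ≤ sv := Real.sqrt_nonneg _
  have hvs : sv ≤ su := Real.sqrt_le_sqrt (by nlinarith)
  have eu : u * (1 - su) = 2*M*u^2 / (1 + su) := by
    rw [eq_div_iff (by positivity)]
    linear_combination (-u) * hsu2
  have ev : v * (1 - sv) = 2*M*v^2 / (1 + sv) := by
    rw [eq_div_iff (by positivity)]
    linear_combination (-v) * hsv2
  rw [eu, ev]
  apply div_le_div₀ (by positivity) (by nlinarith [mul_le_mul huv huv hu.le hv0.le]) (by positivity) (by linarith)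

private lemma schw_lin {a b p q κ : ℝ} (key : b * (1 - q) ≤ a * (1 - p))
    (hx : 0 < a - b) (hκ : 2 < κ) :
    0 < -(2*a) * p + (2*b) * q + κ * (a - b) := by
  nlinarith [mul_pos (show (0:ℝ) < κ - 2 by linarith) hx]

/-- For `M > 0`, `R̄ > 2M`, `κ > 2`, the right-hand side
`F(R) := [−(2/R)√(1 − 2M/R) + (2/R̄)√(1 − 2M/R̄) + κ(1/R − 1/R̄)]·√(1 − 2M/R)`
of the reduced Schwarzschild circle-flow ODE satisfies `F(R̄) = 0`, `F > 0` on `(2M, R̄)`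
and `F < 0` on `(R̄, ∞)`; in particular `R̄` is the unique zero of `F` on `(2M, ∞)`. -/
theorem schwarzschild_flow_rhs_sign (M Rbar κ : ℝ) (hM : 0 < M) (hRbar : 2 * M < Rbar)
    (hκ : 2 < κ) :
    let F : ℝ → ℝ := fun R =>
      (-(2/R) * Real.sqrt (1 - 2*M/R) + (2/Rbar) * Real.sqrt (1 - 2*M/Rbar)
        + κ * (1/R - 1/Rbar)) * Real.sqrt (1 - 2*M/R)
    F Rbar = 0 ∧
    (∀ R : ℝ, 2*M < R → R < Rbar → 0 < F R) ∧
    (∀ R : ℝ, Rbar < R → F R < 0) ∧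
    (∀ R : ℝ, 2*M < R → F R = 0 → R = Rbar) := by
  intro F
  have hRbar0 : 0 < Rbar := by linarith
  have hBarg : 0 < 1 - 2*M/Rbar := by
    rw [sub_pos, div_lt_one hRbar0]; exact hRbar
  have hpos : ∀ R : ℝ, 2*M < R → R < Rbar → 0 < F R := by
    intro R h1 h2
    have hR0 : 0 < R := by linarith
    have hRarg : 0 < 1 - 2*M/R := by rw [sub_pos, div_lt_one hR0]; exact h1
    have hsR : 0 < Real.sqrt (1 - 2*M/R) := Real.sqrt_pos.mpr hRarg
    have key := schw_key M (u := 1/Rbar) (v := 1/R) (by positivity)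
      (one_div_le_one_div_of_le hR0 h2.le)
      (by rw [show 2*M*(1/R) = 2*M/R by ring]; linarith) hM
    rw [show 2*M*(1/Rbar) = 2*M/Rbar by ring, show 2*M*(1/R) = 2*M/R by ring] at key
    have hx : 0 < 1/R - 1/Rbar := by
      rw [sub_pos]; exact one_div_lt_one_div_of_lt hR0 h2
    have hb := schw_lin key hx hκ
    have e : -(2/R) * Real.sqrt (1 - 2*M/R) + (2/Rbar) * Real.sqrt (1 - 2*M/Rbar)
        + κ * (1/R - 1/Rbar)
        = -(2*(1/R)) * Real.sqrt (1 - 2*M/R) + (2*(1/Rbar)) * Real.sqrt (1 - 2*M/Rbar)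
        + κ * (1/R - 1/Rbar) := by ring
    simp only [F]
    rw [e]
    exact mul_pos hb hsR
  have hneg : ∀ R : ℝ, Rbar < R → F R < 0 := by
    intro R h2
    have hR0 : 0 < R := by linarith
    have h1 : 2*M < R := by linarith
    have hRarg : 0 < 1 - 2*M/R := by rw [sub_pos, div_lt_one hR0]; exact h1
    have hsR : 0 < Real.sqrt (1 - 2*M/R) := Real.sqrt_pos.mpr hRarg
    have key := schw_key M (u := 1/R) (v := 1/Rbar) (by positivity)
      (one_div_le_one_div_of_le hRbar0 h2.le)
      (by rw [show 2*M*(1/Rbar) = 2*M/Rbar by ring]; linarith) hM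
    rw [show 2*M*(1/Rbar) = 2*M/Rbar by ring, show 2*M*(1/R) = 2*M/R by ring] at key
    have hx : 0 < 1/Rbar - 1/R := by
      rw [sub_pos]; exact one_div_lt_one_div_of_lt hRbar0 h2
    have hb := schw_lin key hx hκ
    have e : -(2/R) * Real.sqrt (1 - 2*M/R) + (2/Rbar) * Real.sqrt (1 - 2*M/Rbar)
        + κ * (1/R - 1/Rbar)
        = -(-(2*(1/Rbar)) * Real.sqrt (1 - 2*M/Rbar) + (2*(1/R)) * Real.sqrt (1 - 2*M/R)
          + κ * (1/Rbar - 1/R)) := by ring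
    simp only [F]
    rw [e]
    exact mul_neg_of_neg_of_pos (neg_neg_of_pos hb) hsR
  refine ⟨by simp only [F]; ring, hpos, hneg, ?_⟩
  intro R hR hF
  by_contra hne
  rcases lt_or_gt_of_ne hne with h | h
  · exact absurd hF (ne_of_gt (hpos R hR h))
  · exact absurd hF (ne_of_lt (hneg R h))
end

section
/- Let M > 0, R̄ > 2M, κ > 2, and let F(R) := [−(2/R)√(1 − 2M/R) + (2/R̄)√(1 − 2M/R̄) + κ(1/R − 1/R̄)]·√(1 − 2M/R) on (2M, ∞). Every differentiable solution R : [0,∞) → (2M, ∞) of R'(t) = F(R(t)) is monotone: constant if R(0) = R̄, strictly decreasing with R(t) > R̄ for all t if R(0) > R̄, strictly increasing with R(t) < R̄ for all t if R(0) < R̄; and in all cases R(t) → R̄ as t → ∞. Thus the target circle R ≡ R̄ is globally asymptotically stable for the reduced flow in a fixed Schwarzschild background. -/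
open Real Filter

/-- Global asymptotic stability of the target circle `R ≡ R̄` for the reduced circle-flow
ODE `R' = F(R)` in a fixed Schwarzschild background of mass `M`, where
`F(R) = [−(2/R)√(1 − 2M/R) + (2/R̄)√(1 − 2M/R̄) + κ(1/R − 1/R̄)]·√(1 − 2M/R)` on
`(2M, ∞)`: every differentiable solution `R : [0,∞) → (2M, ∞)` is constant if
`R(0) = R̄`, strictly decreasing and `> R̄` if `R(0) > R̄`, strictly increasing and `< R̄`
if `R(0) < R̄`, and in all cases `R(t) → R̄` as `t → ∞`. -/
theorem schwarzschild_flow_ode_stability (M Rbar κ : ℝ) (hM : 0 < M) (hRbar : 2 * M < Rbar)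
    (hκ : 2 < κ) (F : ℝ → ℝ)
    (hF : ∀ R : ℝ, F R =
      (-(2/R) * Real.sqrt (1 - 2*M/R) + (2/Rbar) * Real.sqrt (1 - 2*M/Rbar)
        + κ * (1/R - 1/Rbar)) * Real.sqrt (1 - 2*M/R))
    (R : ℝ → ℝ) (hrange : ∀ t, 0 ≤ t → 2 * M < R t)
    (hode : ∀ t, 0 ≤ t → HasDerivWithinAt R (F (R t)) (Set.Ici 0) t) :
    (R 0 = Rbar → ∀ t, 0 ≤ t → R t = Rbar) ∧
    (Rbar < R 0 → StrictAntiOn R (Set.Ici 0) ∧ ∀ t, 0 ≤ t → Rbar < R t) ∧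
    (R 0 < Rbar → StrictMonoOn R (Set.Ici 0) ∧ ∀ t, 0 ≤ t → R t < Rbar) ∧
    Tendsto R atTop (nhds Rbar) := by
  have h2M : (0:ℝ) < 2 * M := by positivity
  have hsub : ∀ x : ℝ, 2*M < x → 0 < 1 - 2*M/x := by
    intro x hx
    have hx0 : 0 < x := h2M.trans hx
    rw [sub_pos, div_lt_one hx0]; exact hx
  have hs_pos : ∀ x : ℝ, 2*M < x → 0 < Real.sqrt (1 - 2*M/x) :=
    fun x hx => Real.sqrt_pos.2 (hsub x hx)
  have hs_lt_one : ∀ x : ℝ, 2*M < x → Real.sqrt (1 - 2*M/x) < 1 := by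
    intro x hx
    have hx0 : 0 < x := h2M.trans hx
    rw [Real.sqrt_lt' one_pos]
    have : 0 < 2*M/x := by positivity
    nlinarith
  have hs_le : ∀ a b : ℝ, 2*M < a → a ≤ b →
      Real.sqrt (1 - 2*M/a) ≤ Real.sqrt (1 - 2*M/b) := by
    intro a b ha hab
    apply Real.sqrt_le_sqrt
    have ha0 : 0 < a := h2M.trans ha
    have : 2*M/b ≤ 2*M/a := div_le_div_of_nonneg_left h2M.le ha0 hab
    linarith
  have hbracket : ∀ a b : ℝ, 2*M < a → a < b →
      0 < (κ/a - 2*Real.sqrt (1-2*M/a)/a) - (κ/b - 2*Real.sqrt (1-2*M/b)/b) := by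
    intro a b ha hab
    have hb : 2*M < b := ha.trans hab
    have ha0 : 0 < a := h2M.trans ha
    have hb0 : 0 < b := h2M.trans hb
    set sa := Real.sqrt (1-2*M/a) with hsa
    set sb := Real.sqrt (1-2*M/b) with hsb
    have h1 : sa ≤ sb := hs_le a b ha hab.le
    have h2 : sb < 1 := hs_lt_one b hb
    have h3 : 0 < sa := hs_pos a ha
    have hkey : 0 < (κ*b - 2*sa*b) - (κ*a - 2*sb*a) := by
      nlinarith [mul_nonneg (sub_nonneg.2 h1) hb0.le,
        mul_pos (sub_pos.2 hab) (show 0 < κ - 2*sb by linarith)]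
    have heq : (κ/a - 2*sa/a) - (κ/b - 2*sb/b)
        = ((κ*b - 2*sa*b) - (κ*a - 2*sb*a))/(a*b) := by
      field_simp
    rw [heq]
    exact div_pos hkey (by positivity)
  have hFneg : ∀ x : ℝ, Rbar < x → F x < 0 := by
    intro x hx
    have hx2 : 2*M < x := hRbar.trans hx
    have hb := hbracket Rbar x hRbar hx
    rw [hF x]
    apply mul_neg_of_neg_of_pos _ (hs_pos x hx2)
    have : (-(2/x) * Real.sqrt (1 - 2*M/x) + (2/Rbar) * Real.sqrt (1 - 2*M/Rbar)
        + κ * (1/x - 1/Rbar))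
        = -(((κ/Rbar - 2*Real.sqrt (1-2*M/Rbar)/Rbar) - (κ/x - 2*Real.sqrt (1-2*M/x)/x))) := by
      ring
    rw [this]; linarith
  have hFpos : ∀ x : ℝ, 2*M < x → x < Rbar → 0 < F x := by
    intro x hx2 hx
    have hb := hbracket x Rbar hx2 hx
    rw [hF x]
    apply mul_pos _ (hs_pos x hx2)
    have : (-(2/x) * Real.sqrt (1 - 2*M/x) + (2/Rbar) * Real.sqrt (1 - 2*M/Rbar)
        + κ * (1/x - 1/Rbar))
        = ((κ/x - 2*Real.sqrt (1-2*M/x)/x) - (κ/Rbar - 2*Real.sqrt (1-2*M/Rbar)/Rbar)) := by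
      ring
    rw [this]; linarith
  have hFbar : F Rbar = 0 := by rw [hF Rbar]; ring
  -- continuity and derivative facts for R
  have hRcont : ContinuousOn R (Set.Ici 0) := fun t ht => (hode t ht).continuousWithinAt
  have hRderiv : ∀ t : ℝ, 0 < t → HasDerivAt R (F (R t)) t :=
    fun t ht => (hode t ht.le).hasDerivAt (Ici_mem_nhds ht)
  have hderiv_eq : ∀ t : ℝ, 0 < t → deriv R t = F (R t) := fun t ht => (hRderiv t ht).deriv
  -- F is C¹ at Rbar, hence Lipschitz nearby; since F Rbar = 0 we get |F x| ≤ K|x - Rbar|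
  have hRbar0 : Rbar ≠ 0 := ne_of_gt (h2M.trans hRbar)
  have hFfun : F = fun x => (-(2/x) * Real.sqrt (1 - 2*M/x) + (2/Rbar) * Real.sqrt (1 - 2*M/Rbar)
        + κ * (1/x - 1/Rbar)) * Real.sqrt (1 - 2*M/x) := funext hF
  have hFcd : ContDiffAt ℝ 1 F Rbar := by
    rw [hFfun]
    have hid : ContDiffAt ℝ 1 (fun x : ℝ => x) Rbar := contDiffAt_id
    have hu : ContDiffAt ℝ 1 (fun x : ℝ => 1 - 2*M/x) Rbar :=
      contDiffAt_const.sub (contDiffAt_const.div hid hRbar0)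
    have hsq : ContDiffAt ℝ 1 (fun x : ℝ => Real.sqrt (1 - 2*M/x)) Rbar :=
      hu.sqrt (ne_of_gt (hsub Rbar hRbar))
    exact ((((contDiffAt_const.div hid hRbar0).neg.mul hsq).add contDiffAt_const).add
      (contDiffAt_const.mul ((contDiffAt_const.div hid hRbar0).sub contDiffAt_const))).mul hsq
  obtain ⟨K, t0, ht0, hK⟩ := hFcd.exists_lipschitzOnWith
  obtain ⟨ε, hε, hball⟩ := Metric.mem_nhds_iff.1 ht0
  have hLip : ∀ x : ℝ, |x - Rbar| < ε → |F x| ≤ K * |x - Rbar| := by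
    intro x hx
    have hx' : x ∈ t0 := hball (by simpa [Metric.mem_ball, Real.dist_eq] using hx)
    have hb' : Rbar ∈ t0 := hball (Metric.mem_ball_self hε)
    have := hK.dist_le_mul x hx' Rbar hb'
    rwa [Real.dist_eq, Real.dist_eq, hFbar, sub_zero] at this
  have hK0 : (0:ℝ) ≤ (K:ℝ) := K.coe_nonneg
  -- invariance: if R 0 > Rbar then R t > Rbar for all t ≥ 0
  have hinv_gt : Rbar < R 0 → ∀ t, 0 ≤ t → Rbar < R t := by
    intro h0
    by_contra hcon
    push_neg at hcon
    obtain ⟨t, ht, hRt⟩ := hcon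
    set S : Set ℝ := Set.Ici 0 ∩ R ⁻¹' Set.Iic Rbar with hS
    have hSclosed : IsClosed S :=
      hRcont.preimage_isClosed_of_isClosed isClosed_Ici isClosed_Iic
    have hSne : S.Nonempty := ⟨t, ht, hRt⟩
    have hSbdd : BddBelow S := ⟨0, fun s hs => hs.1⟩
    set u := sInf S with hu
    have huS : u ∈ S := hSclosed.csInf_mem hSne hSbdd
    have hu0 : 0 ≤ u := huS.1
    have hubefore : ∀ s, 0 ≤ s → s < u → Rbar < R s := by
      intro s hs hsu
      by_contra h
      push_neg at h
      exact absurd (csInf_le hSbdd ⟨hs, h⟩) (not_le.2 hsu)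
    have hupos : 0 < u := by
      rcases hu0.lt_or_eq with h | h
      · exact h
      · exfalso
        rw [← h] at huS
        exact absurd huS.2 (not_le.2 h0)
    have hIooIci : Set.Ioo 0 u ⊆ Set.Ici 0 := fun x hx => hx.1.le
    have hcw : ContinuousWithinAt R (Set.Ioo 0 u) u := (hRcont u hu0).mono hIooIci
    haveI : (nhdsWithin u (Set.Ioo 0 u)).NeBot := right_nhdsWithin_Ioo_neBot hupos
    have huRbar : R u = Rbar := by
      refine le_antisymm huS.2 (ge_of_tendsto hcw ?_)
      exact eventually_mem_nhdsWithin.mono fun s hs => (hubefore s hs.1.le hs.2).le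
    have hanti0 : StrictAntiOn R (Set.Icc 0 u) := by
      apply strictAntiOn_of_deriv_neg (convex_Icc 0 u) (hRcont.mono Set.Icc_subset_Ici_self)
      intro s hs
      rw [interior_Icc] at hs
      rw [hderiv_eq s hs.1]
      exact hFneg _ (hubefore s hs.1.le hs.2)
    -- pick s₀ < u close to u with R s₀ < Rbar + ε
    have hev : ∀ᶠ s in nhdsWithin u (Set.Ioo 0 u), R s < Rbar + ε := by
      have : Tendsto R (nhdsWithin u (Set.Ioo 0 u)) (nhds Rbar) := by rw [← huRbar]; exact hcw
      exact this.eventually_lt_const (by linarith)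
    obtain ⟨s₀, hs₀R, hs₀mem⟩ := (hev.and eventually_mem_nhdsWithin).exists
    have hs₀pos : 0 < s₀ := hs₀mem.1
    have hs₀u : s₀ < u := hs₀mem.2
    have hsubIcc : Set.Icc s₀ u ⊆ Set.Ici 0 := fun x hx => (hs₀pos.le.trans hx.1)
    have hRle : ∀ s ∈ Set.Icc s₀ u, R s < Rbar + ε := by
      intro s hs
      have : R s ≤ R s₀ := hanti0.antitoneOn ⟨hs₀pos.le, hs₀u.le⟩ ⟨hs₀pos.le.trans hs.1, hs.2⟩ hs.1
      linarith
    have hRge : ∀ s ∈ Set.Icc s₀ u, Rbar ≤ R s := by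
      intro s hs
      rcases hs.2.lt_or_eq with h | h
      · exact (hubefore s (hs₀pos.le.trans hs.1) h).le
      · rw [h, huRbar]
    set g : ℝ → ℝ := fun s => (R s - Rbar) * Real.exp (K * s) with hg
    have hgd : ∀ s ∈ Set.Ioo s₀ u, HasDerivAt g
        (F (R s) * Real.exp (K * s) + (R s - Rbar) * (Real.exp (K * s) * K)) s := by
      intro s hs
      have hs0 : 0 < s := hs₀pos.trans hs.1
      have hexp : HasDerivAt (fun y : ℝ => Real.exp (K * y)) (Real.exp (K * s) * K) s := by
        have h1 : HasDerivAt (fun y : ℝ => (K:ℝ) * y) K s := by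
          simpa using (hasDerivAt_id s).const_mul (K:ℝ)
        exact h1.exp
      exact ((hRderiv s hs0).sub_const Rbar).mul hexp
    have hgderiv_nonneg : ∀ s ∈ Set.Ioo s₀ u, 0 ≤ deriv g s := by
      intro s hs
      rw [(hgd s hs).deriv]
      have hsIcc : s ∈ Set.Icc s₀ u := ⟨hs.1.le, hs.2.le⟩
      have h1 : Rbar ≤ R s := hRge s hsIcc
      have h2 : R s < Rbar + ε := hRle s hsIcc
      have h3 : |R s - Rbar| < ε := abs_lt.2 ⟨by linarith, by linarith⟩
      have h4 := hLip (R s) h3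
      rw [abs_of_nonneg (by linarith : (0:ℝ) ≤ R s - Rbar)] at h4
      have h5 : -(K * (R s - Rbar)) ≤ F (R s) := (abs_le.1 h4).1
      have heq : F (R s) * Real.exp (K * s) + (R s - Rbar) * (Real.exp (K * s) * K)
          = (F (R s) + K * (R s - Rbar)) * Real.exp (K * s) := by ring
      rw [heq]
      exact mul_nonneg (by linarith) (Real.exp_pos _).le
    have hgcont : ContinuousOn g (Set.Icc s₀ u) :=
      ((hRcont.mono hsubIcc).sub continuousOn_const).mul
        (Real.continuous_exp.comp (continuous_const.mul continuous_id)).continuousOn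
    have hgdiff : DifferentiableOn ℝ g (interior (Set.Icc s₀ u)) := by
      rw [interior_Icc]
      exact fun s hs => ((hgd s hs).differentiableAt).differentiableWithinAt
    have hgmono : MonotoneOn g (Set.Icc s₀ u) := by
      apply monotoneOn_of_deriv_nonneg (convex_Icc s₀ u) hgcont hgdiff
      intro s hs
      rw [interior_Icc] at hs
      exact hgderiv_nonneg s hs
    have hcontra := hgmono ⟨le_rfl, hs₀u.le⟩ ⟨hs₀u.le, le_rfl⟩ hs₀u.le
    have hgu : g u = 0 := by simp [hg, huRbar]
    have hgs₀ : 0 < g s₀ :=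
      mul_pos (by have := hubefore s₀ hs₀pos.le hs₀u; linarith) (Real.exp_pos _)
    rw [hgu] at hcontra
    linarith
  -- invariance: if R 0 < Rbar then R t < Rbar for all t ≥ 0
  have hinv_lt : R 0 < Rbar → ∀ t, 0 ≤ t → R t < Rbar := by
    intro h0
    by_contra hcon
    push_neg at hcon
    obtain ⟨t, ht, hRt⟩ := hcon
    set S : Set ℝ := Set.Ici 0 ∩ R ⁻¹' Set.Ici Rbar with hS
    have hSclosed : IsClosed S :=
      hRcont.preimage_isClosed_of_isClosed isClosed_Ici isClosed_Ici
    have hSne : S.Nonempty := ⟨t, ht, hRt⟩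
    have hSbdd : BddBelow S := ⟨0, fun s hs => hs.1⟩
    set u := sInf S with hu
    have huS : u ∈ S := hSclosed.csInf_mem hSne hSbdd
    have hu0 : 0 ≤ u := huS.1
    have hubefore : ∀ s, 0 ≤ s → s < u → R s < Rbar := by
      intro s hs hsu
      by_contra h
      push_neg at h
      exact absurd (csInf_le hSbdd ⟨hs, h⟩) (not_le.2 hsu)
    have hupos : 0 < u := by
      rcases hu0.lt_or_eq with h | h
      · exact h
      · exfalso
        rw [← h] at huS
        exact absurd huS.2 (not_le.2 h0)
    have hIooIci : Set.Ioo 0 u ⊆ Set.Ici 0 := fun x hx => hx.1.le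
    have hcw : ContinuousWithinAt R (Set.Ioo 0 u) u := (hRcont u hu0).mono hIooIci
    haveI : (nhdsWithin u (Set.Ioo 0 u)).NeBot := right_nhdsWithin_Ioo_neBot hupos
    have huRbar : R u = Rbar := by
      refine le_antisymm (le_of_tendsto hcw ?_) huS.2
      exact eventually_mem_nhdsWithin.mono fun s hs => (hubefore s hs.1.le hs.2).le
    have hmono0 : StrictMonoOn R (Set.Icc 0 u) := by
      apply strictMonoOn_of_deriv_pos (convex_Icc 0 u) (hRcont.mono Set.Icc_subset_Ici_self)
      intro s hs
      rw [interior_Icc] at hs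
      rw [hderiv_eq s hs.1]
      exact hFpos _ (hrange s hs.1.le) (hubefore s hs.1.le hs.2)
    have hev : ∀ᶠ s in nhdsWithin u (Set.Ioo 0 u), Rbar - ε < R s := by
      have : Tendsto R (nhdsWithin u (Set.Ioo 0 u)) (nhds Rbar) := by rw [← huRbar]; exact hcw
      exact this.eventually_const_lt (by linarith)
    obtain ⟨s₀, hs₀R, hs₀mem⟩ := (hev.and eventually_mem_nhdsWithin).exists
    have hs₀pos : 0 < s₀ := hs₀mem.1
    have hs₀u : s₀ < u := hs₀mem.2
    have hsubIcc : Set.Icc s₀ u ⊆ Set.Ici 0 := fun x hx => (hs₀pos.le.trans hx.1)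
    have hRgt : ∀ s ∈ Set.Icc s₀ u, Rbar - ε < R s := by
      intro s hs
      have : R s₀ ≤ R s := hmono0.monotoneOn ⟨hs₀pos.le, hs₀u.le⟩ ⟨hs₀pos.le.trans hs.1, hs.2⟩ hs.1
      linarith
    have hRle' : ∀ s ∈ Set.Icc s₀ u, R s ≤ Rbar := by
      intro s hs
      rcases hs.2.lt_or_eq with h | h
      · exact (hubefore s (hs₀pos.le.trans hs.1) h).le
      · rw [h, huRbar]
    set g : ℝ → ℝ := fun s => (Rbar - R s) * Real.exp (K * s) with hg
    have hgd : ∀ s ∈ Set.Ioo s₀ u, HasDerivAt g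
        ((-F (R s)) * Real.exp (K * s) + (Rbar - R s) * (Real.exp (K * s) * K)) s := by
      intro s hs
      have hs0 : 0 < s := hs₀pos.trans hs.1
      have hexp : HasDerivAt (fun y : ℝ => Real.exp (K * y)) (Real.exp (K * s) * K) s := by
        have h1 : HasDerivAt (fun y : ℝ => (K:ℝ) * y) K s := by
          simpa using (hasDerivAt_id s).const_mul (K:ℝ)
        exact h1.exp
      exact ((hRderiv s hs0).const_sub Rbar).mul hexp
    have hgderiv_nonneg : ∀ s ∈ Set.Ioo s₀ u, 0 ≤ deriv g s := by
      intro s hs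
      rw [(hgd s hs).deriv]
      have hsIcc : s ∈ Set.Icc s₀ u := ⟨hs.1.le, hs.2.le⟩
      have h1 : R s ≤ Rbar := hRle' s hsIcc
      have h2 : Rbar - ε < R s := hRgt s hsIcc
      have h3 : |R s - Rbar| < ε := abs_lt.2 ⟨by linarith, by linarith⟩
      have h4 := hLip (R s) h3
      rw [abs_of_nonpos (by linarith : R s - Rbar ≤ 0)] at h4
      have h5 : F (R s) ≤ K * (Rbar - R s) := by
        have := (abs_le.1 h4).2
        nlinarith
      have heq : (-F (R s)) * Real.exp (K * s) + (Rbar - R s) * (Real.exp (K * s) * K)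
          = (K * (Rbar - R s) - F (R s)) * Real.exp (K * s) := by ring
      rw [heq]
      exact mul_nonneg (by linarith) (Real.exp_pos _).le
    have hgcont : ContinuousOn g (Set.Icc s₀ u) :=
      (continuousOn_const.sub (hRcont.mono hsubIcc)).mul
        (Real.continuous_exp.comp (continuous_const.mul continuous_id)).continuousOn
    have hgdiff : DifferentiableOn ℝ g (interior (Set.Icc s₀ u)) := by
      rw [interior_Icc]
      exact fun s hs => ((hgd s hs).differentiableAt).differentiableWithinAt
    have hgmono : MonotoneOn g (Set.Icc s₀ u) := by
      apply monotoneOn_of_deriv_nonneg (convex_Icc s₀ u) hgcont hgdiff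
      intro s hs
      rw [interior_Icc] at hs
      exact hgderiv_nonneg s hs
    have hcontra := hgmono ⟨le_rfl, hs₀u.le⟩ ⟨hs₀u.le, le_rfl⟩ hs₀u.le
    have hgu : g u = 0 := by simp [hg, huRbar]
    have hgs₀ : 0 < g s₀ :=
      mul_pos (by have := hubefore s₀ hs₀pos.le hs₀u; linarith) (Real.exp_pos _)
    rw [hgu] at hcontra
    linarith
  -- equality case: if R 0 = Rbar then R ≡ Rbar
  have heqcase : R 0 = Rbar → ∀ t, 0 ≤ t → R t = Rbar := by
    intro h0 t ht
    by_contra hne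
    rcases lt_or_gt_of_ne hne with hlt | hgt
    · -- R t < Rbar : take last time u ≤ t with R u ≥ Rbar
      set B : Set ℝ := Set.Icc 0 t ∩ R ⁻¹' Set.Ici Rbar with hB
      have hBclosed : IsClosed B :=
        (hRcont.mono Set.Icc_subset_Ici_self).preimage_isClosed_of_isClosed isClosed_Icc
          isClosed_Ici
      have hBne : B.Nonempty := ⟨0, ⟨le_rfl, ht⟩, le_of_eq h0.symm⟩
      have hBbdd : BddAbove B := ⟨t, fun s hs => hs.1.2⟩
      set u := sSup B with hu
      have huB : u ∈ B := hBclosed.csSup_mem hBne hBbdd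
      have hu0 : 0 ≤ u := huB.1.1
      have hut : u ≤ t := huB.1.2
      have hunet : u ≠ t := by
        intro h; rw [h] at huB; exact absurd huB.2 (not_le.2 hlt)
      have hult : u < t := lt_of_le_of_ne hut hunet
      have huafter : ∀ s, u < s → s ≤ t → R s < Rbar := by
        intro s hus hst
        by_contra h
        push_neg at h
        exact absurd (le_csSup hBbdd ⟨⟨hu0.trans hus.le, hst⟩, h⟩) (not_le.2 hus)
      have hcw : ContinuousWithinAt R (Set.Ioo u t) u :=
        (hRcont u hu0).mono (fun x hx => hu0.trans hx.1.le)
      haveI : (nhdsWithin u (Set.Ioo u t)).NeBot := left_nhdsWithin_Ioo_neBot hult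
      have huRbar : R u = Rbar := by
        refine le_antisymm (le_of_tendsto hcw ?_) huB.2
        exact eventually_mem_nhdsWithin.mono fun s hs => (huafter s hs.1 hs.2.le).le
      have hmono : StrictMonoOn R (Set.Icc u t) := by
        apply strictMonoOn_of_deriv_pos (convex_Icc u t)
          (hRcont.mono (fun x hx => hu0.trans hx.1))
        intro s hs
        rw [interior_Icc] at hs
        rw [hderiv_eq s (lt_of_le_of_lt hu0 hs.1)]
        exact hFpos _ (hrange s (hu0.trans hs.1.le)) (huafter s hs.1 hs.2.le)
      have := hmono ⟨le_rfl, hult.le⟩ ⟨hult.le, le_rfl⟩ hult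
      rw [huRbar] at this
      exact absurd this (not_lt.2 hlt.le)
    · -- R t > Rbar : take last time u ≤ t with R u ≤ Rbar
      set B : Set ℝ := Set.Icc 0 t ∩ R ⁻¹' Set.Iic Rbar with hB
      have hBclosed : IsClosed B :=
        (hRcont.mono Set.Icc_subset_Ici_self).preimage_isClosed_of_isClosed isClosed_Icc
          isClosed_Iic
      have hBne : B.Nonempty := ⟨0, ⟨le_rfl, ht⟩, le_of_eq h0⟩
      have hBbdd : BddAbove B := ⟨t, fun s hs => hs.1.2⟩
      set u := sSup B with hu
      have huB : u ∈ B := hBclosed.csSup_mem hBne hBbdd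
      have hu0 : 0 ≤ u := huB.1.1
      have hut : u ≤ t := huB.1.2
      have hunet : u ≠ t := by
        intro h; rw [h] at huB; exact absurd huB.2 (not_le.2 hgt)
      have hult : u < t := lt_of_le_of_ne hut hunet
      have huafter : ∀ s, u < s → s ≤ t → Rbar < R s := by
        intro s hus hst
        by_contra h
        push_neg at h
        exact absurd (le_csSup hBbdd ⟨⟨hu0.trans hus.le, hst⟩, h⟩) (not_le.2 hus)
      have hcw : ContinuousWithinAt R (Set.Ioo u t) u :=
        (hRcont u hu0).mono (fun x hx => hu0.trans hx.1.le)
      haveI : (nhdsWithin u (Set.Ioo u t)).NeBot := left_nhdsWithin_Ioo_neBot hult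
      have huRbar : R u = Rbar := by
        refine le_antisymm huB.2 (ge_of_tendsto hcw ?_)
        exact eventually_mem_nhdsWithin.mono fun s hs => (huafter s hs.1 hs.2.le).le
      have hanti : StrictAntiOn R (Set.Icc u t) := by
        apply strictAntiOn_of_deriv_neg (convex_Icc u t)
          (hRcont.mono (fun x hx => hu0.trans hx.1))
        intro s hs
        rw [interior_Icc] at hs
        rw [hderiv_eq s (lt_of_le_of_lt hu0 hs.1)]
        exact hFneg _ (huafter s hs.1 hs.2.le)
      have := hanti ⟨le_rfl, hult.le⟩ ⟨hult.le, le_rfl⟩ hult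
      rw [huRbar] at this
      exact absurd this (not_lt.2 hgt.le)
  -- global strict monotonicity
  have hSA : Rbar < R 0 → StrictAntiOn R (Set.Ici 0) := by
    intro h0
    apply strictAntiOn_of_deriv_neg (convex_Ici 0) hRcont
    intro s hs
    rw [interior_Ici] at hs
    rw [hderiv_eq s hs]
    exact hFneg _ (hinv_gt h0 s hs.le)
  have hSM : R 0 < Rbar → StrictMonoOn R (Set.Ici 0) := by
    intro h0
    apply strictMonoOn_of_deriv_pos (convex_Ici 0) hRcont
    intro s hs
    rw [interior_Ici] at hs
    rw [hderiv_eq s hs]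
    exact hFpos _ (hrange s hs.le) (hinv_lt h0 s hs.le)
  -- continuity of F away from 0
  have hFcont0 : ContinuousOn F (Set.Ioi (0:ℝ)) := by
    rw [hFfun]
    have hne : ∀ x ∈ Set.Ioi (0:ℝ), x ≠ 0 := fun x hx => ne_of_gt hx
    have hdiv2 : ContinuousOn (fun x : ℝ => 2/x) (Set.Ioi 0) :=
      continuousOn_const.div continuousOn_id hne
    have hdiv1 : ContinuousOn (fun x : ℝ => 1/x) (Set.Ioi 0) :=
      continuousOn_const.div continuousOn_id hne
    have hdivM : ContinuousOn (fun x : ℝ => 2*M/x) (Set.Ioi 0) :=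
      continuousOn_const.div continuousOn_id hne
    have hsqc : ContinuousOn (fun x : ℝ => Real.sqrt (1 - 2*M/x)) (Set.Ioi 0) :=
      Real.continuous_sqrt.comp_continuousOn (continuousOn_const.sub hdivM)
    exact ((hdiv2.neg.mul hsqc).add continuousOn_const).add
      (continuousOn_const.mul (hdiv1.sub continuousOn_const)) |>.mul hsqc
  -- convergence
  have htendsto : Tendsto R atTop (nhds Rbar) := by
    rcases lt_trichotomy (R 0) Rbar with h0 | h0 | h0
    · -- increasing case
      have hlt := hinv_lt h0
      have hSM' := hSM h0
      set Q : ℝ → ℝ := fun s => R (max s 0) with hQ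
      have hQmono : Monotone Q := fun a b hab =>
        hSM'.monotoneOn (le_max_right a 0) (le_max_right b 0) (max_le_max hab le_rfl)
      have hQbdd : BddAbove (Set.range Q) := by
        refine ⟨Rbar, ?_⟩
        rintro x ⟨s, rfl⟩
        exact (hlt _ (le_max_right s 0)).le
      have htend := tendsto_atTop_ciSup hQmono hQbdd
      set L := ⨆ s : ℝ, Q s with hL
      have hLle : L ≤ Rbar := ciSup_le fun s => (hlt _ (le_max_right s 0)).le
      have hge : ∀ s : ℝ, 0 ≤ s → R s ≤ L := by
        intro s hs
        have := le_ciSup hQbdd s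
        simpa [hQ, max_eq_left hs] using this
      have hLeq : L = Rbar := by
        by_contra hLne
        have hLlt : L < Rbar := lt_of_le_of_ne hLle hLne
        have hR0L : R 0 ≤ L := hge 0 le_rfl
        have h2MR0 : 2*M < R 0 := hrange 0 le_rfl
        have hsubI : Set.Icc (R 0) L ⊆ Set.Ioi (0:ℝ) :=
          fun x hx => lt_of_le_of_lt (by positivity : (0:ℝ) ≤ 2*M) (lt_of_lt_of_le h2MR0 hx.1)
        obtain ⟨x, hxmem, hxmin⟩ := isCompact_Icc.exists_isMinOn ⟨R 0, Set.left_mem_Icc.2 hR0L⟩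
          (hFcont0.mono hsubI)
        set δ := F x with hδdef
        have hδ : 0 < δ := hFpos x (lt_of_lt_of_le h2MR0 hxmem.1) (lt_of_le_of_lt hxmem.2 hLlt)
        have hder : ∀ s ∈ Set.Ioi (0:ℝ), HasDerivAt (fun t => R t - δ * t) (F (R s) - δ) s := by
          intro s hs
          have h1 : HasDerivAt (fun t : ℝ => δ * t) δ s := by
            simpa using (hasDerivAt_id s).const_mul δ
          exact (hRderiv s hs).sub h1
        have hmono2 : MonotoneOn (fun t => R t - δ * t) (Set.Ici 0) := by
          apply monotoneOn_of_deriv_nonneg (convex_Ici 0)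
            (hRcont.sub (continuous_const.mul continuous_id').continuousOn)
          · rw [interior_Ici]
            exact fun s hs => ((hder s hs).differentiableAt).differentiableWithinAt
          · rw [interior_Ici]
            intro s hs
            change 0 ≤ deriv (fun t => R t - δ * t) s
            rw [(hder s hs).deriv]
            have hRs : R s ∈ Set.Icc (R 0) L :=
              ⟨hSM'.monotoneOn Set.self_mem_Ici (Set.mem_Ici.2 hs.le) hs.le, hge s hs.le⟩
            have := hxmin hRs
            simp only [sub_nonneg]
            exact this
        set T := max 0 ((L - R 0)/δ + 1) with hT
        have hT0 : (0:ℝ) ≤ T := le_max_left 0 _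
        have h6 := hmono2 Set.self_mem_Ici hT0 hT0
        have h7 : δ * ((L - R 0)/δ + 1) = L - R 0 + δ := by field_simp
        have h8 : δ * ((L - R 0)/δ + 1) ≤ δ * T := mul_le_mul_of_nonneg_left (le_max_right _ _) hδ.le
        have h9 := hge T hT0
        simp only at h6
        have h10 : L - R 0 + δ ≤ δ * T := by rw [← h7]; exact h8
        have h11 : δ * (0:ℝ) = 0 := mul_zero δ
        linarith
      rw [← hLeq]
      refine htend.congr' ?_
      filter_upwards [eventually_ge_atTop (0:ℝ)] with s hs
      simp [hQ, max_eq_left hs]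
    · -- constant case
      have heq := heqcase h0
      refine Tendsto.congr' ?_ (tendsto_const_nhds : Tendsto (fun _ : ℝ => Rbar) atTop _)
      filter_upwards [eventually_ge_atTop (0:ℝ)] with s hs
      exact (heq s hs).symm
    · -- decreasing case
      have hgt := hinv_gt h0
      have hSA' := hSA h0
      set Q : ℝ → ℝ := fun s => R (max s 0) with hQ
      have hQanti : Antitone Q := fun a b hab =>
        hSA'.antitoneOn (le_max_right a 0) (le_max_right b 0) (max_le_max hab le_rfl)
      have hQbdd : BddBelow (Set.range Q) := by
        refine ⟨Rbar, ?_⟩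
        rintro x ⟨s, rfl⟩
        exact (hgt _ (le_max_right s 0)).le
      have htend := tendsto_atTop_ciInf hQanti hQbdd
      set L := ⨅ s : ℝ, Q s with hL
      have hLge : Rbar ≤ L := le_ciInf fun s => (hgt _ (le_max_right s 0)).le
      have hge : ∀ s : ℝ, 0 ≤ s → L ≤ R s := by
        intro s hs
        have := ciInf_le hQbdd s
        simpa [hQ, max_eq_left hs] using this
      have hLeq : L = Rbar := by
        by_contra hLne
        have hLgt : Rbar < L := lt_of_le_of_ne hLge (Ne.symm hLne)
        have hR0L : L ≤ R 0 := hge 0 le_rfl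
        have hsubI : Set.Icc L (R 0) ⊆ Set.Ioi (0:ℝ) :=
          fun x hx => lt_of_le_of_lt (by positivity : (0:ℝ) ≤ 2*M)
            (lt_of_lt_of_le (hRbar.trans hLgt) hx.1)
        obtain ⟨x, hxmem, hxmax⟩ := isCompact_Icc.exists_isMaxOn ⟨L, Set.left_mem_Icc.2 hR0L⟩
          (hFcont0.mono hsubI)
        set δ := -F x with hδdef
        have hδ : 0 < δ := by
          have := hFneg x (lt_of_lt_of_le hLgt hxmem.1)
          simp only [hδdef]
          linarith
        have hder : ∀ s ∈ Set.Ioi (0:ℝ), HasDerivAt (fun t => R t + δ * t) (F (R s) + δ) s := by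
          intro s hs
          have h1 : HasDerivAt (fun t : ℝ => δ * t) δ s := by
            simpa using (hasDerivAt_id s).const_mul δ
          exact (hRderiv s hs).add h1
        have hanti2 : AntitoneOn (fun t => R t + δ * t) (Set.Ici 0) := by
          apply antitoneOn_of_deriv_nonpos (convex_Ici 0)
            (hRcont.add (continuous_const.mul continuous_id').continuousOn)
          · rw [interior_Ici]
            exact fun s hs => ((hder s hs).differentiableAt).differentiableWithinAt
          · rw [interior_Ici]
            intro s hs
            change deriv (fun t => R t + δ * t) s ≤ 0
            rw [(hder s hs).deriv]
            have hRs : R s ∈ Set.Icc L (R 0) :=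
              ⟨hge s hs.le, hSA'.antitoneOn Set.self_mem_Ici (Set.mem_Ici.2 hs.le) hs.le⟩
            have h' : F (R s) ≤ F x := hxmax hRs
            simp only [hδdef]
            linarith
        set T := max 0 ((R 0 - L)/δ + 1) with hT
        have hT0 : (0:ℝ) ≤ T := le_max_left 0 _
        have h6 := hanti2 Set.self_mem_Ici hT0 hT0
        have h7 : δ * ((R 0 - L)/δ + 1) = R 0 - L + δ := by field_simp
        have h8 : δ * ((R 0 - L)/δ + 1) ≤ δ * T := mul_le_mul_of_nonneg_left (le_max_right _ _) hδ.le
        have h9 := hge T hT0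
        simp only at h6
        have h10 : R 0 - L + δ ≤ δ * T := by rw [← h7]; exact h8
        have h11 : δ * (0:ℝ) = 0 := mul_zero δ
        linarith
      rw [← hLeq]
      refine htend.congr' ?_
      filter_upwards [eventually_ge_atTop (0:ℝ)] with s hs
      simp [hQ, max_eq_left hs]
  exact ⟨heqcase, fun h0 => ⟨hSA h0, hinv_gt h0⟩, fun h0 => ⟨hSM h0, hinv_lt h0⟩, htendsto⟩
end

section
/- Let κ > 2. If b : [−1,1] → ℝ is twice continuously differentiable and satisfies (1 − x²)b''(x) − 2x b'(x) = (κ/π)·∫_{−1}^{1} b(y)/√(1 − y²) dy for all x ∈ [−1,1], then b is identically zero. -/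
open Real Topology Filter

/-- The weighted integral of `1` equals `π`. -/
lemma integral_one_div_sqrt_one_sub_sq' :
    ∫ y in (-1:ℝ)..1, 1 / Real.sqrt (1 - y^2) = π := by
  rw [intervalIntegral.integral_of_le (by norm_num : (-1:ℝ) ≤ 1),
    MeasureTheory.integral_Ioc_eq_integral_Ioo]
  have himg : Real.sin '' Set.Ioo (-(π/2)) (π/2) = Set.Ioo (-1 : ℝ) 1 :=
    Real.sinPartialHomeomorph.image_source_eq_target
  have hinj : Set.InjOn Real.sin (Set.Ioo (-(π/2)) (π/2)) :=
    Real.injOn_sin.mono (Set.Ioo_subset_Icc_self)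
  rw [← himg,
    MeasureTheory.integral_image_eq_integral_abs_deriv_smul measurableSet_Ioo
      (fun x _ => (Real.hasDerivAt_sin x).hasDerivWithinAt) hinj]
  have : ∀ x ∈ Set.Ioo (-(π/2)) (π/2),
      |Real.cos x| • (1 / Real.sqrt (1 - Real.sin x ^ 2)) = 1 := by
    intro x hx
    have hcos : 0 < Real.cos x := Real.cos_pos_of_mem_Ioo hx
    rw [← Real.cos_eq_sqrt_one_sub_sin_sq hx.1.le hx.2.le, abs_of_pos hcos,
      smul_eq_mul]
    field_simp
  rw [MeasureTheory.setIntegral_congr_fun measurableSet_Ioo this]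
  simp only [MeasureTheory.integral_const, MeasureTheory.Measure.restrict_apply,
    MeasurableSet.univ, Set.univ_inter, Real.volume_Ioo, smul_eq_mul, mul_one]
  rw [MeasureTheory.measureReal_def, MeasureTheory.Measure.restrict_apply MeasurableSet.univ,
    Set.univ_inter, Real.volume_Ioo,
    ENNReal.toReal_ofReal (by linarith [Real.pi_pos] : (0:ℝ) ≤ π/2 - -(π/2))]
  ring

/-- Case `α = 0` of the nonlocal Legendre-type equation: if `κ > 2` and
`b : [−1,1] → ℝ` is twice continuously differentiable with
`(1 − x²)b''(x) − 2x b'(x) = (κ/π)·∫_{−1}^{1} b(y)/√(1 − y²) dy` for all `x ∈ [−1,1]`,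
then `b` is identically zero. -/
theorem nonlocal_legendre_alpha_zero (κ : ℝ) (hκ : 2 < κ) (b : ℝ → ℝ)
    (hb : ContDiffOn ℝ 2 b (Set.Icc (-1) 1))
    (heq : ∀ x ∈ Set.Icc (-1:ℝ) 1,
      (1 - x^2) * iteratedDerivWithin 2 b (Set.Icc (-1) 1) x
        - 2 * x * derivWithin b (Set.Icc (-1) 1) x
        = (κ/π) * ∫ y in (-1:ℝ)..1, b y / Real.sqrt (1 - y^2)) :
    ∀ x ∈ Set.Icc (-1:ℝ) 1, b x = 0 := by
  set I := Set.Icc (-1:ℝ) 1 with hIdef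
  have hI : UniqueDiffOn ℝ I := uniqueDiffOn_Icc (by norm_num)
  set C : ℝ := (κ/π) * ∫ y in (-1:ℝ)..1, b y / Real.sqrt (1 - y^2) with hCdef
  set b' := derivWithin b I with hb'def
  -- regularity
  have hb1 : ContDiffOn ℝ 1 b' I := hb.derivWithin hI (by norm_num)
  have hbd : DifferentiableOn ℝ b I := hb.differentiableOn (by norm_num)
  have hb'd : DifferentiableOn ℝ b' I := hb1.differentiableOn (by norm_num)
  -- rewrite second derivative
  have hiter : ∀ x ∈ I, iteratedDerivWithin 2 b I x = derivWithin b' I x := by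
    intro x hx
    rw [iteratedDerivWithin_succ',
      iteratedDerivWithin_one]
  -- the function g x = (1 - x^2) * b' x has derivative C within I
  set g : ℝ → ℝ := fun x => (1 - x^2) * b' x with hgdef
  have hg : ∀ x ∈ I, HasDerivWithinAt g C I x := by
    intro x hx
    have h1 : HasDerivWithinAt (fun x : ℝ => 1 - x^2) (-(2*x)) I x := by
      simpa using ((hasDerivAt_pow 2 x).hasDerivWithinAt.const_sub (1:ℝ))
    have h2 : HasDerivWithinAt b' (derivWithin b' I x) I x :=
      (hb'd x hx).hasDerivWithinAt
    have h3 := h1.mul h2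
    have h4 : -(2*x) * b' x + (1 - x^2) * derivWithin b' I x = C := by
      have := heq x hx
      rw [hiter x hx] at this
      linarith
    rw [h4] at h3
    exact h3
  -- h x = g x - C * x has zero derivative on I, hence is constant
  set h : ℝ → ℝ := fun x => g x - C * x with hhdef
  have hhderiv : ∀ x ∈ I, HasDerivWithinAt h 0 I x := by
    intro x hx
    have := (hg x hx).sub ((hasDerivAt_id x).const_mul C).hasDerivWithinAt
    simp at this
    exact this
  have hhdiff : DifferentiableOn ℝ h I := fun x hx =>
    (hhderiv x hx).differentiableWithinAt
  have hhconst : ∀ x ∈ I, h x = h (-1) :=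
    constant_of_derivWithin_zero hhdiff (fun x hx =>
      (hhderiv x (Set.mem_Icc_of_Ico hx)).derivWithin
        (hI.uniqueDiffWithinAt (Set.mem_Icc_of_Ico hx)))
  -- g vanishes at both endpoints
  have hgneg1 : g (-1) = 0 := by simp [hgdef]
  have hg1 : g 1 = 0 := by simp [hgdef]
  -- hence C = 0
  have hC0 : C = 0 := by
    have h1 := hhconst 1 (by rw [hIdef]; norm_num)
    simp only [hhdef, hg1, hgneg1] at h1
    linarith
  -- and g ≡ 0 on I
  have hg0 : ∀ x ∈ I, g x = 0 := by
    intro x hx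
    have := hhconst x hx
    simp only [hhdef, hgneg1, hC0] at this
    linarith
  -- so b' vanishes on the open interval
  have hb'Ioo : ∀ x ∈ Set.Ioo (-1:ℝ) 1, b' x = 0 := by
    intro x hx
    have hne : (1 - x^2) ≠ 0 := by nlinarith [hx.1, hx.2]
    have := hg0 x (Set.mem_Icc_of_Ioo hx)
    simp only [hgdef, mul_eq_zero] at this
    tauto
  -- b' is continuous on I, so it vanishes at -1 as well
  have hb'neg1 : b' (-1) = 0 := by
    have hmem : (-1:ℝ) ∈ I := by norm_num [hIdef]
    have hcont : ContinuousWithinAt b' (Set.Ioo (-1:ℝ) 1) (-1) :=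
      ((hb1.continuousOn (-1) hmem).mono Set.Ioo_subset_Icc_self)
    have hne : (𝓝[Set.Ioo (-1:ℝ) 1] (-1:ℝ)).NeBot := by
      rw [← mem_closure_iff_nhdsWithin_neBot, closure_Ioo (by norm_num : (-1:ℝ) ≠ 1)]
      norm_num
    have ht0 : Filter.Tendsto b' (𝓝[Set.Ioo (-1:ℝ) 1] (-1)) (𝓝 0) := by
      refine Filter.Tendsto.congr' ?_ tendsto_const_nhds
      filter_upwards [self_mem_nhdsWithin] with y hy
      exact (hb'Ioo y hy).symm
    exact tendsto_nhds_unique hcont ht0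
  -- hence derivWithin b I vanishes on Ico (-1) 1 and b is constant
  have hb'Ico : ∀ x ∈ Set.Ico (-1:ℝ) 1, derivWithin b I x = 0 := by
    intro x hx
    rcases eq_or_lt_of_le hx.1 with h | h
    · rw [← h]; exact hb'neg1
    · exact hb'Ioo x ⟨h, hx.2⟩
  have hconst : ∀ x ∈ I, b x = b (-1) :=
    constant_of_derivWithin_zero hbd hb'Ico
  -- compute the integral for the constant function
  have hint : (∫ y in (-1:ℝ)..1, b y / Real.sqrt (1 - y^2)) = b (-1) * π := by
    have : (∫ y in (-1:ℝ)..1, b y / Real.sqrt (1 - y^2))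
        = ∫ y in (-1:ℝ)..1, b (-1) * (1 / Real.sqrt (1 - y^2)) := by
      refine intervalIntegral.integral_congr ?_
      intro y hy
      rw [Set.uIcc_of_le (by norm_num : (-1:ℝ) ≤ 1)] at hy
      show b y / Real.sqrt (1 - y^2) = b (-1) * (1 / Real.sqrt (1 - y^2))
      rw [hconst y hy]
      ring
    rw [this, intervalIntegral.integral_const_mul, integral_one_div_sqrt_one_sub_sq']
  -- conclude : C = κ * b(-1) = 0, so b(-1) = 0
  have hpi : (π:ℝ) ≠ 0 := Real.pi_ne_zero
  have hbneg1 : b (-1) = 0 := by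
    have : C = κ * b (-1) := by
      rw [hCdef, hint]
      field_simp
    rw [hC0] at this
    have hκ0 : κ ≠ 0 := by linarith
    rcases mul_eq_zero.mp this.symm with h | h
    · exact absurd h hκ0
    · exact h
  intro x hx
  rw [hconst x hx, hbneg1]
end

section
/- Let κ > 2, R̄ > 0, and L̄ := πR̄. (i) For every A₀ ∈ ℝ, the function μ(t,τ) := A₀·exp((2 − κ)t/R̄²) satisfies the linearised radial flow equation ∂_t μ = ∂_τ²μ + (1/R̄)cot(τ/R̄)∂_τμ + (2/R̄²)μ − (κ/(πR̄³))∫₀^{L̄} μ(t,σ) dσ for all t > 0 and τ ∈ (0, L̄). (ii) For every integer l ≥ 1 with κ ≠ l(l+1), setting I_l := ∫_{−1}^{1} P_l(y)/√(1−y²) dy and λ_l := (l(l+1)κ)/((l(l+1)−κ)π)·I_l, the function μ(t,τ) := exp((2 − l(l+1))t/R̄²)·(P_l(cos(τ/R̄)) + λ_l/(l(l+1))) satisfies the same equation for all t > 0 and τ ∈ (0, L̄). -/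
open Real

section Aux
open Polynomial

lemma itd_add (k : ℕ) (a b : Polynomial ℝ) :
    derivative^[k] (a + b) = derivative^[k] a + derivative^[k] b := by
  induction k generalizing a b with
  | zero => simp
  | succ k ih => simp [Function.iterate_succ_apply, ih]

lemma iter_deriv_X_mul (k : ℕ) (v : Polynomial ℝ) :
    derivative^[k+1] (X * v) = X * derivative^[k+1] v + (k+1 : ℕ) • derivative^[k] v := by
  induction k generalizing v with
  | zero => simp [derivative_mul]; ring
  | succ k ih =>
      rw [Function.iterate_succ_apply, derivative_mul, derivative_X, one_mul,
        itd_add, ih (derivative v), ← Function.iterate_succ_apply]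
      simp only [succ_nsmul, add_smul, one_smul, ← Function.iterate_succ_apply,
        Nat.succ_eq_add_one, two_smul]
      abel

lemma iter_deriv_quad_mul (k : ℕ) (v : Polynomial ℝ) :
    derivative^[k+2] ((X^2 - 1) * v)
      = (X^2 - 1) * derivative^[k+2] v + (2*(k+2) : ℕ) • (X * derivative^[k+1] v)
        + ((k+2)*(k+1) : ℕ) • derivative^[k] v := by
  have hC : (C (2:ℝ)) = 2 := map_ofNat C 2
  induction k generalizing v with
  | zero =>
      simp only [Function.iterate_succ_apply, Function.iterate_zero_apply, Function.iterate_one]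
      simp [derivative_mul, hC]
      ring
  | succ k ih =>
      rw [Function.iterate_succ_apply, derivative_mul]
      have hd : derivative ((X:Polynomial ℝ)^2 - 1) = C 2 * X := by
        simp [derivative_X_pow]
        rw [one_add_one_eq_two, map_ofNat C 2]
      rw [hd, itd_add, ih (derivative v), ← Function.iterate_succ_apply,
        mul_assoc, iterate_derivative_C_mul, iter_deriv_X_mul (k+1) v, hC]
      show _ = (X ^ 2 - 1) * derivative^[k + 3] v + (2 * (k + 3)) • (X * derivative^[k + 2] v)
        + ((k + 3) * (k + 2)) • derivative^[k+1] v
      simp only [nsmul_eq_mul, ← Function.iterate_succ_apply]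
      push_cast
      ring

/-- The Legendre polynomial `P_n`, defined by the Rodrigues formula
`P_n = 1/(2ⁿ n!) · dⁿ/dxⁿ (x² − 1)ⁿ`. -/
noncomputable def legendre (n : ℕ) : Polynomial ℝ :=
  ((1 : ℝ) / (2^n * n.factorial)) • (Polynomial.derivative^[n] ((Polynomial.X^2 - 1)^n))

lemma legendre_ode (n : ℕ) (hn : 1 ≤ n) :
    (X^2-1) * derivative (derivative (legendre n)) + 2*(X * derivative (legendre n))
      = ((n*(n+1)) : ℕ) • legendre n := by
  set u : Polynomial ℝ := (X^2 - 1)^n with hu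
  have key : (X^2-1) * derivative^[n+2] u + 2*(X * derivative^[n+1] u)
      = ((n*(n+1)) : ℕ) • derivative^[n] u := by
    have h1 : (X^2 - 1 : Polynomial ℝ) * derivative u = (2*n : ℕ) • (X * u) := by
      rw [hu, derivative_pow]
      have : derivative ((X:Polynomial ℝ)^2 - 1) = C 2 * X := by simp [derivative_X_pow]; rw [one_add_one_eq_two, map_ofNat C 2]
      rw [this]
      have hpow : ((X:Polynomial ℝ)^2-1) * ((X:Polynomial ℝ)^2-1)^(n-1) = ((X:Polynomial ℝ)^2-1)^n := by
        rw [← pow_succ']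
        congr 1
        omega
      rw [show (X^2-1 : Polynomial ℝ) * (C (n:ℝ) * (X ^ 2 - 1) ^ (n - 1) * (C 2 * X))
          = (C (n:ℝ) * C 2) * (X * ((X^2-1) * (X^2-1)^(n-1))) by ring, hpow]
      have hC2 : (C (2:ℝ)) = 2 := map_ofNat C 2
      rw [hC2]
      simp [nsmul_eq_mul]
      push_cast
      ring_nf
      simp
    have h2 := congrArg (derivative^[n+1]) h1
    rw [show n+1 = (n-1)+2 by omega] at h2
    rw [iter_deriv_quad_mul (n-1) (derivative u)] at h2
    simp only [← Function.iterate_succ_apply, Nat.succ_eq_add_one,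
      show n-1+2+1 = n+2 by omega, show n-1+1+1 = n+1 by omega, show n-1+1 = n by omega,
      show n-1+2 = n+1 by omega, show n+1+1 = n+2 by omega, iterate_derivative_smul] at h2
    rw [iter_deriv_X_mul n u] at h2
    have h2' : (X^2-1) * derivative^[n+2] u + (2*(n+1)) • (X * derivative^[n+1] u)
        + ((n+1)*n) • derivative^[n] u
        = (2*n) • (X * derivative^[n+1] u) + (2*n*(n+1)) • derivative^[n] u := by
      rw [h2, smul_add, smul_smul]
    have goal' : (X^2-1) * derivative^[n+2] u + 2 • (X * derivative^[n+1] u)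
        = ((n*(n+1)) : ℕ) • derivative^[n] u := by
      have e1 : (2*(n+1)) • (X * derivative^[n+1] u)
          = (2*n) • (X * derivative^[n+1] u) + 2 • (X * derivative^[n+1] u) := by
        rw [← add_smul]; ring_nf
      have e2 : (2*n*(n+1)) • (derivative^[n] u : Polynomial ℝ)
          = ((n+1)*n) • derivative^[n] u + (n*(n+1)) • derivative^[n] u := by
        rw [← add_smul]; ring_nf
      rw [e1, e2] at h2'
      have := h2'
      abel_nf at this ⊢
      linear_combination (norm := abel_nf) this
    simpa [two_smul, two_mul, mul_add] using goal'
  have hsm : legendre n = ((1 : ℝ) / (2^n * n.factorial)) • derivative^[n] u := rfl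
  have hDD : derivative (derivative (derivative^[n] u)) = derivative^[n+2] u := by
    rw [← Function.iterate_succ_apply' derivative n u,
      ← Function.iterate_succ_apply' derivative (n+1) u]
  have hD1 : derivative (derivative^[n] u) = derivative^[n+1] u :=
    (Function.iterate_succ_apply' _ _ _).symm
  rw [hsm, derivative_smul, derivative_smul, hDD, hD1, mul_smul_comm, mul_smul_comm,
    mul_smul_comm, ← smul_add, key, smul_comm]


lemma cos_image_Ioo : Real.cos '' Set.Ioo 0 π = Set.Ioo (-1 : ℝ) 1 := by
  ext y
  constructor
  · rintro ⟨x, hx, rfl⟩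
    constructor
    · have := Real.strictAntiOn_cos ⟨hx.1.le, hx.2.le⟩
        ⟨le_of_lt (lt_trans hx.1 hx.2), le_refl π⟩ hx.2
      simpa [Real.cos_pi] using this
    · have := Real.strictAntiOn_cos ⟨le_refl 0, le_of_lt (lt_trans hx.1 hx.2)⟩
        ⟨hx.1.le, hx.2.le⟩ hx.1
      simpa [Real.cos_zero] using this
  · rintro ⟨h1, h2⟩
    refine ⟨Real.arccos y, ⟨Real.arccos_pos.2 h2, ?_⟩, Real.cos_arccos h1.le h2.le⟩
    rcases lt_or_eq_of_le (Real.arccos_le_pi y) with h | h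
    · exact h
    · exfalso
      have : Real.cos (Real.arccos y) = -1 := by rw [h, Real.cos_pi]
      rw [Real.cos_arccos h1.le h2.le] at this
      exact absurd this (ne_of_gt h1)

lemma integral_eval_cos (p : Polynomial ℝ) :
    (∫ x in (0:ℝ)..π, p.eval (Real.cos x))
      = ∫ y in (-1:ℝ)..1, p.eval y / Real.sqrt (1 - y^2) := by
  rw [intervalIntegral.integral_of_le Real.pi_pos.le,
      intervalIntegral.integral_of_le (by norm_num : (-1:ℝ) ≤ 1),
      MeasureTheory.integral_Ioc_eq_integral_Ioo, MeasureTheory.integral_Ioc_eq_integral_Ioo,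
      ← cos_image_Ioo,
      MeasureTheory.integral_image_eq_integral_abs_deriv_smul measurableSet_Ioo
        (fun x _ => (Real.hasDerivAt_cos x).hasDerivWithinAt)
        (Real.injOn_cos.mono Set.Ioo_subset_Icc_self)]
  apply MeasureTheory.setIntegral_congr_fun measurableSet_Ioo
  intro x hx
  have hs : 0 < Real.sin x := Real.sin_pos_of_mem_Ioo hx
  have hsq : Real.sqrt (1 - Real.cos x ^ 2) = Real.sin x := by
    rw [show (1:ℝ) - Real.cos x ^ 2 = Real.sin x ^ 2 by
      have := Real.sin_sq_add_cos_sq x; linarith]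
    exact Real.sqrt_sq hs.le
  simp only [hsq, abs_neg, abs_of_pos hs, smul_eq_mul]
  field_simp

end Aux

section Aux2
open Polynomial

lemma legendre_ode_eval (n : ℕ) (hn : 1 ≤ n) (x : ℝ) :
    (x^2-1) * (derivative (derivative (legendre n))).eval x
      + 2*(x * (derivative (legendre n)).eval x)
      = ((n:ℝ)*((n:ℝ)+1)) * (legendre n).eval x := by
  have h := congrArg (eval x) (legendre_ode n hn)
  simp only [eval_add, eval_mul, eval_smul, eval_pow, eval_X, eval_sub, eval_one,
    eval_ofNat, eval_natCast, smul_eq_mul, nsmul_eq_mul, Nat.cast_mul, Nat.cast_add,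
    Nat.cast_one] at h
  linarith [h]

end Aux2

open Polynomial in
/-- Explicit solutions of the linearised radial flow equation
`∂_t μ = ∂_τ²μ + (1/R̄)cot(τ/R̄)∂_τμ + (2/R̄²)μ − (κ/(πR̄³))∫₀^{L̄} μ(t,σ)dσ`, `L̄ = πR̄`:
(i) `μ(t,τ) = A₀·exp((2 − κ)t/R̄²)` for any `A₀`;
(ii) `μ(t,τ) = exp((2 − l(l+1))t/R̄²)·(P_l(cos(τ/R̄)) + λ_l/(l(l+1)))` for any integer
`l ≥ 1` with `κ ≠ l(l+1)`, where `λ_l := (l(l+1)κ)/((l(l+1)−κ)π)·∫_{−1}^{1}P_l(y)/√(1−y²)dy`. -/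
theorem linearised_flow_modes (κ Rbar : ℝ) (hκ : 2 < κ) (hRbar : 0 < Rbar) :
    let Lbar : ℝ := π * Rbar
    -- (i)
    (∀ A₀ : ℝ,
      let μ : ℝ → ℝ → ℝ := fun t _τ => A₀ * Real.exp ((2 - κ) * t / Rbar^2)
      ∀ t : ℝ, 0 < t → ∀ τ ∈ Set.Ioo 0 Lbar,
        deriv (fun s => μ s τ) t
          = deriv (deriv (μ t)) τ + (1/Rbar) * Real.cot (τ/Rbar) * deriv (μ t) τ
            + (2/Rbar^2) * μ t τ - (κ/(π * Rbar^3)) * ∫ σ in (0:ℝ)..Lbar, μ t σ) ∧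
    -- (ii)
    (∀ l : ℕ, 1 ≤ l → κ ≠ (l:ℝ) * ((l:ℝ) + 1) →
      let I : ℝ := ∫ y in (-1:ℝ)..1, (legendre l).eval y / Real.sqrt (1 - y^2)
      let lam : ℝ := ((l:ℝ) * ((l:ℝ) + 1) * κ) / (((l:ℝ) * ((l:ℝ) + 1) - κ) * π) * I
      let μ : ℝ → ℝ → ℝ := fun t τ =>
        Real.exp ((2 - (l:ℝ) * ((l:ℝ) + 1)) * t / Rbar^2) *
          ((legendre l).eval (Real.cos (τ/Rbar)) + lam / ((l:ℝ) * ((l:ℝ) + 1)))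
      ∀ t : ℝ, 0 < t → ∀ τ ∈ Set.Ioo 0 Lbar,
        deriv (fun s => μ s τ) t
          = deriv (deriv (μ t)) τ + (1/Rbar) * Real.cot (τ/Rbar) * deriv (μ t) τ
            + (2/Rbar^2) * μ t τ - (κ/(π * Rbar^3)) * ∫ σ in (0:ℝ)..Lbar, μ t σ) := by
  intro Lbar
  have hR : Rbar ≠ 0 := ne_of_gt hRbar
  have hπ : π ≠ 0 := Real.pi_ne_zero
  constructor
  · -- Part (i)
    intro A₀ μ t ht τ hτ
    rw [show (fun s => μ s τ) = (fun s => A₀ * Real.exp ((2 - κ) * s / Rbar^2)) from rfl,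
        show μ t = (fun _ : ℝ => A₀ * Real.exp ((2 - κ) * t / Rbar^2)) from rfl]
    have hL : HasDerivAt (fun s : ℝ => A₀ * Real.exp ((2 - κ) * s / Rbar^2))
        (A₀ * (Real.exp ((2 - κ) * t / Rbar^2) * ((2 - κ) / Rbar^2))) t := by
      have h1 : HasDerivAt (fun s : ℝ => (2 - κ) * s / Rbar^2) ((2 - κ) / Rbar^2) t := by
        simpa using ((hasDerivAt_id t).const_mul (2 - κ)).div_const (Rbar^2)
      exact h1.exp.const_mul A₀
    rw [hL.deriv]
    simp only [deriv_const']
    rw [show Lbar = π * Rbar from rfl]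
    rw [intervalIntegral.integral_const]
    simp only [deriv_const', smul_eq_mul]
    field_simp
    ring
  · -- Part (ii)
    intro l hl hkl I lam μ t ht τ hτ
    obtain ⟨hτ0, hτL⟩ := hτ
    have hLb : Lbar = π * Rbar := rfl
    have hl1 : (1:ℝ) ≤ (l:ℝ) := by exact_mod_cast hl
    have hn0 : ((l:ℝ) * ((l:ℝ) + 1)) ≠ 0 := by nlinarith
    have hnκ : ((l:ℝ) * ((l:ℝ) + 1)) - κ ≠ 0 := sub_ne_zero.2 (Ne.symm hkl)
    have hτπ : τ / Rbar < π := by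
      rw [div_lt_iff₀ hRbar]; rw [hLb] at hτL; linarith
    have hsinpos : 0 < Real.sin (τ/Rbar) :=
      Real.sin_pos_of_pos_of_lt_pi (by positivity) hτπ
    have hsne : Real.sin (τ/Rbar) ≠ 0 := ne_of_gt hsinpos
    set P : Polynomial ℝ := legendre l with hPdef
    set c : ℝ := lam / ((l:ℝ) * ((l:ℝ) + 1)) with hcdef
    set E : ℝ := Real.exp ((2 - (l:ℝ) * ((l:ℝ) + 1)) * t / Rbar^2) with hEdef
    have h1 : ∀ σ : ℝ, HasDerivAt (fun σ : ℝ => σ / Rbar) (1 / Rbar) σ := fun σ => by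
      simpa using (hasDerivAt_id σ).div_const Rbar
    have hcos : ∀ σ : ℝ, HasDerivAt (fun σ : ℝ => Real.cos (σ / Rbar))
        (-Real.sin (σ / Rbar) / Rbar) σ := fun σ => by
      exact ((Real.hasDerivAt_cos (σ / Rbar)).comp σ (h1 σ)).congr_deriv (by ring : _ = -Real.sin (σ / Rbar) / Rbar)
    have hF : ∀ (q : Polynomial ℝ) (σ : ℝ),
        HasDerivAt (fun σ : ℝ => q.eval (Real.cos (σ / Rbar)))
          ((derivative q).eval (Real.cos (σ / Rbar)) * (-Real.sin (σ / Rbar) / Rbar)) σ :=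
      fun q σ => (q.hasDerivAt _).comp σ (hcos σ)
    rw [show (fun s => μ s τ)
        = (fun s => Real.exp ((2 - (l:ℝ) * ((l:ℝ) + 1)) * s / Rbar^2)
            * (P.eval (Real.cos (τ/Rbar)) + c)) from rfl,
      show μ t = (fun σ => E * (P.eval (Real.cos (σ/Rbar)) + c)) from rfl]
    -- t-derivative
    have hLt : HasDerivAt (fun s : ℝ => Real.exp ((2 - (l:ℝ) * ((l:ℝ) + 1)) * s / Rbar^2)
          * (P.eval (Real.cos (τ/Rbar)) + c))
        (E * ((2 - (l:ℝ) * ((l:ℝ) + 1)) / Rbar^2) * (P.eval (Real.cos (τ/Rbar)) + c)) t := by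
      have h : HasDerivAt (fun s : ℝ => (2 - (l:ℝ) * ((l:ℝ) + 1)) * s / Rbar^2)
          ((2 - (l:ℝ) * ((l:ℝ) + 1)) / Rbar^2) t := by
        simpa using ((hasDerivAt_id t).const_mul (2 - (l:ℝ) * ((l:ℝ) + 1))).div_const (Rbar^2)
      exact (h.exp.mul_const (P.eval (Real.cos (τ/Rbar)) + c)).congr_deriv
        (by rw [hEdef]; try ring)
    rw [hLt.deriv]
    -- first spatial derivative
    have hD1 : deriv (fun σ => E * (P.eval (Real.cos (σ/Rbar)) + c))
        = fun σ => E * ((derivative P).eval (Real.cos (σ/Rbar))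
            * (-Real.sin (σ/Rbar) / Rbar)) := by
      funext σ
      exact (((hF P σ).add_const c).const_mul E).deriv
    rw [hD1]
    -- second spatial derivative
    have hsin' : HasDerivAt (fun σ : ℝ => -Real.sin (σ/Rbar) / Rbar)
        (-Real.cos (τ/Rbar) / Rbar^2) τ := by
      exact (((Real.hasDerivAt_sin (τ/Rbar)).comp τ (h1 τ)).neg.div_const Rbar).congr_deriv
        (by ring : _ = -Real.cos (τ/Rbar) / Rbar^2)
    have hD2 : HasDerivAt (fun σ => E * ((derivative P).eval (Real.cos (σ/Rbar))
          * (-Real.sin (σ/Rbar) / Rbar)))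
        (E * ((derivative (derivative P)).eval (Real.cos (τ/Rbar))
            * (-Real.sin (τ/Rbar) / Rbar) * (-Real.sin (τ/Rbar) / Rbar)
          + (derivative P).eval (Real.cos (τ/Rbar)) * (-Real.cos (τ/Rbar) / Rbar^2))) τ := by
      exact (((hF (derivative P) τ).mul hsin').const_mul E).congr_deriv (by ring)
    rw [hD2.deriv]
    -- the integral
    have hcont : Continuous fun σ : ℝ => P.eval (Real.cos (σ/Rbar)) :=
      P.continuous.comp (Real.continuous_cos.comp (continuous_id.div_const Rbar))
    have hIval : (∫ y in (-1:ℝ)..1, P.eval y / Real.sqrt (1 - y^2)) = I := rfl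
    have hInt : (∫ σ in (0:ℝ)..Lbar, E * (P.eval (Real.cos (σ/Rbar)) + c))
        = E * (Rbar * I + (π * Rbar) * c) := by
      rw [intervalIntegral.integral_const_mul]
      congr 1
      rw [intervalIntegral.integral_add (hcont.intervalIntegrable _ _) intervalIntegrable_const,
        intervalIntegral.integral_const,
        intervalIntegral.integral_comp_div (fun y => P.eval (Real.cos y)) hR,
        show (0:ℝ) / Rbar = 0 by simp, show Lbar / Rbar = π by rw [hLb]; field_simp,
        integral_eval_cos P, hIval, hLb]
      simp only [smul_eq_mul, sub_zero]
      try ring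
    rw [hInt]
    -- algebra
    have hode := legendre_ode_eval l hl (Real.cos (τ/Rbar))
    rw [← hPdef] at hode
    have hsin2 : Real.sin (τ/Rbar)^2 = 1 - Real.cos (τ/Rbar)^2 := by
      have := Real.sin_sq_add_cos_sq (τ/Rbar); linarith
    have hc : c * (((l:ℝ) * ((l:ℝ) + 1)) - κ) * π = κ * I := by
      have hlam : lam = ((l:ℝ) * ((l:ℝ) + 1) * κ)
          / ((((l:ℝ) * ((l:ℝ) + 1)) - κ) * π) * I := rfl
      rw [hcdef, hlam]
      field_simp
    rw [Real.cot_eq_cos_div_sin]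
    beta_reduce
    set x : ℝ := Real.cos (τ/Rbar) with hx
    set s : ℝ := Real.sin (τ/Rbar) with hs
    set P0 : ℝ := P.eval x
    set P1 : ℝ := (derivative P).eval x
    set P2 : ℝ := (derivative (derivative P)).eval x
    rw [show 1 / Rbar * (x / s) * (E * (P1 * (-s / Rbar))) = -(E * P1 * x) / Rbar^2 by
      field_simp]
    rw [show κ / (π * Rbar ^ 3) * (E * (Rbar * I + π * Rbar * c))
        = (κ*E*I/π + κ*E*c)/Rbar^2 by field_simp]
    have hc' : c * ((l:ℝ) * ((l:ℝ) + 1) - κ) = κ * I / π := by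
      rw [eq_div_iff hπ]; linear_combination hc
    linear_combination (E/Rbar^2) * hode - (E*P2/Rbar^2) * hsin2 - (E/Rbar^2) * hc'
end
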